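/- arXiv:2405.03016 — 6 statements merged into one kernel-verified Lean document; each statement's English description precedes it below -/
import Mathlib

section
/- Let γ ∈ [0,1], τ > 0 and let m ≥ 1 be a natural number. Then the operator I + τT is invertible, and for every x ∈ H one has ‖(I + τT)^{-m}(T^γ x)‖ ≤ (mτ)^{-γ} ‖x‖. (Hilbert-space form of the uniform resolvent-power estimate ‖(I − τΔ_h)^{-m}‖_{ℒ(Ḣ_h^{α,q}, Ḣ_h^{β,q})} ≤ c (mτ)^{-(β−α)/2}, with γ = (β−α)/2.) -/
/-- Key pointwise estimate: for `s ≥ 0`, `s ^ γ / (1 + τ s) ^ m ≤ (m τ) ^ (-γ)`. -/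
lemma pointwise_resolvent_estimate {γ τ s : ℝ} (hγ0 : 0 ≤ γ) (hγ1 : γ ≤ 1)
    (hτ : 0 < τ) {m : ℕ} (hm : 1 ≤ m) (hs : 0 ≤ s) :
    ((1 + τ * s)⁻¹) ^ m * s ^ γ ≤ ((m : ℝ) * τ) ^ (-γ) := by
  have hm' : (1:ℝ) ≤ (m:ℝ) := by exact_mod_cast hm
  have hmτ : (0:ℝ) < (m : ℝ) * τ := by positivity
  have hden : (0:ℝ) < 1 + τ * s := by positivity
  have hdenm : (0:ℝ) < (1 + τ * s) ^ m := by positivity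
  -- `(m τ s) ^ γ ≤ 1 + m τ s`
  have h1 : ((m : ℝ) * τ * s) ^ γ ≤ 1 + (m : ℝ) * (τ * s) := by
    set u : ℝ := (m : ℝ) * τ * s with hu
    have hu0 : 0 ≤ u := by positivity
    have hueq : (m : ℝ) * (τ * s) = u := by rw [hu]; ring
    rw [hueq]
    rcases le_or_gt u 1 with h | h
    · calc u ^ γ ≤ 1 := Real.rpow_le_one hu0 h hγ0
        _ ≤ 1 + u := by linarith
    · calc u ^ γ ≤ u ^ (1:ℝ) := Real.rpow_le_rpow_of_exponent_le h.le hγ1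
        _ = u := Real.rpow_one u
        _ ≤ 1 + u := by linarith
  -- Bernoulli: `1 + m τ s ≤ (1 + τ s) ^ m`
  have h2 : 1 + (m : ℝ) * (τ * s) ≤ (1 + τ * s) ^ m := by
    have := one_add_mul_le_pow (a := τ * s) (by nlinarith) m
    linarith
  have key : ((m : ℝ) * τ) ^ γ * s ^ γ ≤ (1 + τ * s) ^ m := by
    calc ((m:ℝ)*τ) ^ γ * s ^ γ = ((m:ℝ)*τ*s) ^ γ := (Real.mul_rpow hmτ.le hs).symm
      _ ≤ 1 + (m : ℝ) * (τ * s) := h1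
      _ ≤ (1 + τ * s) ^ m := h2
  have hc : ((m : ℝ) * τ) ^ (-γ) = (((m : ℝ) * τ) ^ γ)⁻¹ := Real.rpow_neg hmτ.le γ
  rw [hc, inv_pow, ← one_div, ← one_div, div_mul_eq_mul_div, one_mul,
    div_le_div_iff₀ hdenm (Real.rpow_pos_of_pos hmτ γ), one_mul]
  calc s ^ γ * ((m:ℝ)*τ) ^ γ = ((m:ℝ)*τ) ^ γ * s ^ γ := by ring
    _ ≤ (1 + τ * s) ^ m := key

/-- Hilbert-space form of the uniform resolvent-power estimate: if `T` is a bounded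
self-adjoint positive operator on a complex Hilbert space, `γ ∈ [0,1]`, `τ > 0` and
`m ≥ 1`, then `I + τT` is invertible and `‖(I + τT)^{-m}(T^γ x)‖ ≤ (mτ)^{-γ} ‖x‖`,
where `T^γ` is given by the continuous functional calculus. -/
theorem resolvent_power_estimate
    (H : Type*) [NormedAddCommGroup H] [InnerProductSpace ℂ H] [CompleteSpace H]
    (T : H →L[ℂ] H) (hT : T.IsPositive)
    (γ : ℝ) (hγ0 : 0 ≤ γ) (hγ1 : γ ≤ 1) (τ : ℝ) (hτ : 0 < τ)
    (m : ℕ) (hm : 1 ≤ m) :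
    IsUnit (1 + τ • T) ∧
      ∀ x : H,
        ‖(Ring.inverse (1 + τ • T) ^ m) (cfc (fun s : ℝ => s ^ γ) T x)‖ ≤
          ((m : ℝ) * τ) ^ (-γ) * ‖x‖ := by
  have hsa : IsSelfAdjoint T := hT.isSelfAdjoint
  have hT' : (0:H→L[ℂ]H) ≤ T := (ContinuousLinearMap.nonneg_iff_isPositive T).mpr hT
  have hspec : ∀ s ∈ spectrum ℝ T, (0:ℝ) ≤ s := fun s hs => spectrum_nonneg_of_nonneg hT' hs
  have hden : ∀ s ∈ spectrum ℝ T, (1 + τ * s) ≠ 0 := fun s hs => by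
    have := hspec s hs; positivity
  have hgcont : ContinuousOn (fun s : ℝ => (1 + τ * s)⁻¹) (spectrum ℝ T) :=
    ContinuousOn.inv₀ (by fun_prop) hden
  have hfcont : ContinuousOn (fun s : ℝ => s ^ γ) (spectrum ℝ T) := by
    rcases eq_or_lt_of_le hγ0 with h | h
    · simp only [← h, Real.rpow_zero]; exact continuousOn_const
    · exact fun s hs => (Real.continuousAt_rpow_const s γ (Or.inr h.le)).continuousWithinAt
  -- `1 + τ • T` as a cfc
  have hA : cfc (fun s : ℝ => 1 + τ * s) T = 1 + τ • T := by
    rw [cfc_const_add 1 (fun s => τ * s) T (by fun_prop) hsa, cfc_const_mul_id τ T hsa, map_one]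
  have hone : (1:H →L[ℂ] H) = cfc (fun _ : ℝ => (1:ℝ)) T := by rw [cfc_const 1 T hsa, map_one]
  have hmul : (1 + τ • T) * cfc (fun s : ℝ => (1 + τ * s)⁻¹) T = 1 := by
    rw [← hA, ← cfc_mul _ _ T (by fun_prop) hgcont, hone]
    exact cfc_congr fun s hs => mul_inv_cancel₀ (hden s hs)
  have hmul' : cfc (fun s : ℝ => (1 + τ * s)⁻¹) T * (1 + τ • T) = 1 := by
    rw [← hA, ← cfc_mul _ _ T hgcont (by fun_prop), hone]
    exact cfc_congr fun s hs => inv_mul_cancel₀ (hden s hs)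
  have hunit : IsUnit (1 + τ • T) :=
    ⟨⟨1 + τ • T, cfc (fun s : ℝ => (1 + τ * s)⁻¹) T, hmul, hmul'⟩, rfl⟩
  refine ⟨hunit, fun x => ?_⟩
  have hinv : Ring.inverse (1 + τ • T) = cfc (fun s : ℝ => (1 + τ * s)⁻¹) T := by
    conv_lhs => rw [← hunit.unit_spec]
    rw [Ring.inverse_unit]
    exact Units.inv_eq_of_mul_eq_one_right (by rw [hunit.unit_spec]; exact hmul)
  set F : ℝ → ℝ := fun s : ℝ => ((1 + τ * s)⁻¹) ^ m * s ^ γ with hF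
  have hkey : Ring.inverse (1 + τ • T) ^ m * cfc (fun s : ℝ => s ^ γ) T = cfc F T := by
    rw [hinv, ← cfc_pow _ m T hgcont hsa, ← cfc_mul (fun x : ℝ => (1 + τ * x)⁻¹ ^ m) _ T (hgcont.pow m) hfcont]
  have hc : (0:ℝ) ≤ ((m : ℝ) * τ) ^ (-γ) := by positivity
  have hnorm : ‖cfc F T‖ ≤ ((m : ℝ) * τ) ^ (-γ) := by
    refine norm_cfc_le hc fun s hs => ?_
    have hs0 := hspec s hs
    have hF0 : 0 ≤ F s := by
      have : (0:ℝ) < 1 + τ * s := by positivity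
      have := Real.rpow_nonneg hs0 γ
      positivity
    rw [Real.norm_of_nonneg hF0]
    exact pointwise_resolvent_estimate hγ0 hγ1 hτ hm hs0
  calc ‖(Ring.inverse (1 + τ • T) ^ m) (cfc (fun s : ℝ => s ^ γ) T x)‖
      = ‖(Ring.inverse (1 + τ • T) ^ m * cfc (fun s : ℝ => s ^ γ) T) x‖ := by
        rw [ContinuousLinearMap.mul_apply]
    _ = ‖(cfc F T) x‖ := by rw [hkey]
    _ ≤ ‖cfc F T‖ * ‖x‖ := (cfc F T).le_opNorm x
    _ ≤ ((m : ℝ) * τ) ^ (-γ) * ‖x‖ := mul_le_mul_of_nonneg_right hnorm (norm_nonneg x)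
end

section
/- Let E be a real inner product space, let u, w ∈ E, and let m ≥ 1 be a natural number. Then ‖u + w‖^{2m} ≤ ‖u‖^{2m} + 2m ⟪u + w, w⟫ ∫₀¹ ‖u + θw‖^{2m−2} dθ. (This is the one-sided Taylor bound obtained from d/dθ ‖g(θ)‖^{2m} ≤ 2m ‖g(θ)‖^{2m−2} ⟪g(1), g′(θ)⟫ for the affine path g(θ) = u + θw.) -/
/-- One-sided Taylor bound for the even power of the norm along the affine path
`θ ↦ u + θw` in a real inner product space:
`‖u + w‖^{2m} ≤ ‖u‖^{2m} + 2m ⟪u + w, w⟫ ∫₀¹ ‖u + θw‖^{2m−2} dθ`. -/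
theorem norm_pow_taylor_bound
    (E : Type*) [NormedAddCommGroup E] [InnerProductSpace ℝ E]
    (u w : E) (m : ℕ) (hm : 1 ≤ m) :
    ‖u + w‖ ^ (2 * m) ≤
      ‖u‖ ^ (2 * m) +
        (2 * m : ℝ) * (inner ℝ (u + w) w : ℝ) *
          ∫ θ in (0:ℝ)..1, ‖u + θ • w‖ ^ (2 * m - 2) := by
  have h22 : 2 * m - 2 = 2 * (m - 1) := by omega
  -- derivative of the path and of the even power of the norm
  have hg : ∀ θ : ℝ, HasDerivAt (fun θ : ℝ => u + θ • w) w θ := fun θ => by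
    simpa using ((hasDerivAt_id θ).smul_const w).const_add u
  have hD : ∀ θ : ℝ, HasDerivAt (fun θ : ℝ => ‖u + θ • w‖ ^ (2 * m))
      ((2 * m : ℝ) * (inner ℝ (u + θ • w) w : ℝ) * ‖u + θ • w‖ ^ (2 * m - 2)) θ := by
    intro θ
    have hφ : HasDerivAt (fun θ : ℝ => (inner ℝ (u + θ • w) (u + θ • w) : ℝ))
        (2 * (inner ℝ (u + θ • w) w : ℝ)) θ := by
      have := (hg θ).inner ℝ (hg θ)
      simpa [real_inner_comm, two_mul] using this
    have hpow := hφ.fun_pow m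
    have heq : (fun θ : ℝ => (inner ℝ (u + θ • w) (u + θ • w) : ℝ) ^ m)
        = fun θ : ℝ => ‖u + θ • w‖ ^ (2 * m) := by
      funext t
      rw [real_inner_self_eq_norm_sq, ← pow_mul, mul_comm]
    have heq2 : (inner ℝ (u + θ • w) (u + θ • w) : ℝ) ^ (m - 1) = ‖u + θ • w‖ ^ (2 * m - 2) := by
      rw [real_inner_self_eq_norm_sq, ← pow_mul, h22, mul_comm]
    rw [heq] at hpow
    refine hpow.congr_deriv ?_
    rw [heq2]; ring
  -- continuity of pieces
  have hcont : Continuous fun θ : ℝ => u + θ • w :=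
    continuous_const.add (continuous_id.smul continuous_const)
  have hcont1 : Continuous fun θ : ℝ => (‖u + θ • w‖ : ℝ) ^ (2 * m - 2) :=
    (hcont.norm).pow _
  have hcont2 : Continuous fun θ : ℝ =>
      (2 * m : ℝ) * (inner ℝ (u + θ • w) w : ℝ) * ‖u + θ • w‖ ^ (2 * m - 2) :=
    ((continuous_const.mul ((continuous_inner).comp (hcont.prodMk continuous_const)))).mul hcont1
  -- FTC
  have hftc : (∫ θ in (0:ℝ)..1,
      (2 * m : ℝ) * (inner ℝ (u + θ • w) w : ℝ) * ‖u + θ • w‖ ^ (2 * m - 2))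
      = ‖u + w‖ ^ (2 * m) - ‖u‖ ^ (2 * m) := by
    have := intervalIntegral.integral_eq_sub_of_hasDerivAt
      (f := fun θ : ℝ => ‖u + θ • w‖ ^ (2 * m))
      (fun θ _ => hD θ) (hcont2.intervalIntegrable 0 1)
    simpa using this
  -- pointwise bound on [0,1]
  have hpt : ∀ θ ∈ Set.Icc (0:ℝ) 1,
      (2 * m : ℝ) * (inner ℝ (u + θ • w) w : ℝ) * ‖u + θ • w‖ ^ (2 * m - 2)
      ≤ (2 * m : ℝ) * (inner ℝ (u + w) w : ℝ) * ‖u + θ • w‖ ^ (2 * m - 2) := by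
    intro θ hθ
    have hinner : (inner ℝ (u + θ • w) w : ℝ) ≤ (inner ℝ (u + w) w : ℝ) := by
      have : (inner ℝ (u + w) w : ℝ) - (inner ℝ (u + θ • w) w : ℝ)
          = (1 - θ) * (inner ℝ w w : ℝ) := by
        simp [inner_add_left, inner_smul_left, inner_sub_left]; ring
      nlinarith [real_inner_self_nonneg (x := w), hθ.2]
    have hm2 : (0:ℝ) ≤ (2 * m : ℝ) := by positivity
    have hpow : (0:ℝ) ≤ ‖u + θ • w‖ ^ (2 * m - 2) := by positivity
    nlinarith [mul_le_mul_of_nonneg_right (mul_le_mul_of_nonneg_left hinner hm2) hpow]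
  have hmono : (∫ θ in (0:ℝ)..1,
      (2 * m : ℝ) * (inner ℝ (u + θ • w) w : ℝ) * ‖u + θ • w‖ ^ (2 * m - 2))
      ≤ ∫ θ in (0:ℝ)..1,
      (2 * m : ℝ) * (inner ℝ (u + w) w : ℝ) * ‖u + θ • w‖ ^ (2 * m - 2) :=
    intervalIntegral.integral_mono_on (by norm_num)
      (hcont2.intervalIntegrable 0 1)
      ((continuous_const.mul hcont1).intervalIntegrable 0 1) hpt
  rw [← intervalIntegral.integral_const_mul]
  linarith [hftc ▸ hmono]
end

section
/- Let θ₀ ∈ ℝ be such that ‖Z + θ₀M‖_{L^q} ≠ 0. Then the function φ(θ) := ‖Z + θM‖_{L^q}^p is differentiable at θ₀ with φ′(θ₀) = p ‖Z + θ₀M‖_{L^q}^{p−q} ⟨|Z + θ₀M|^{q−2}(Z + θ₀M), M⟩. -/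
open MeasureTheory
open scoped ENNReal

/-- First derivative of `θ ↦ ‖Z + θM‖_{L^q}^p`: at any `θ₀` with `‖Z + θ₀M‖_{L^q} ≠ 0`,
the function is differentiable with derivative
`p ‖Z + θ₀M‖_{L^q}^{p−q} ⟨|Z + θ₀M|^{q−2}(Z + θ₀M), M⟩`. -/
theorem lq_norm_pow_hasDerivAt
    (S : Type*) [MeasurableSpace S] (μ : Measure S) [SigmaFinite μ]
    (q p : ℝ) (hq2 : 2 ≤ q) (hp2 : 2 < p)
    (Z M : S → ℝ)
    (hZ : MemLp Z (ENNReal.ofReal q) μ) (hM : MemLp M (ENNReal.ofReal q) μ)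
    (θ₀ : ℝ)
    (hne : (∫ x, |Z x + θ₀ * M x| ^ q ∂μ) ^ (1 / q) ≠ 0) :
    HasDerivAt (fun θ : ℝ => ((∫ x, |Z x + θ * M x| ^ q ∂μ) ^ (1 / q)) ^ p)
      (p * ((∫ x, |Z x + θ₀ * M x| ^ q ∂μ) ^ (1 / q)) ^ (p - q) *
        ∫ x, |Z x + θ₀ * M x| ^ (q - 2) * (Z x + θ₀ * M x) * M x ∂μ) θ₀ := by
  have hq0 : (0:ℝ) < q := by linarith
  have hq1 : (1:ℝ) < q := by linarith
  have hq1' : (0:ℝ) < q - 1 := by linarith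
  have hqne : ENNReal.ofReal q ≠ 0 := by
    simp only [ne_eq, ENNReal.ofReal_eq_zero, not_le]; exact hq0
  have hqtop : ENNReal.ofReal q ≠ ⊤ := ENNReal.ofReal_ne_top
  have hq_toReal : (ENNReal.ofReal q).toReal = q := ENNReal.toReal_ofReal hq0.le
  set c : ℝ := |θ₀| + 1 with hc
  -- MemLp of Z + θ M
  have hu : ∀ θ : ℝ, MemLp (fun x => Z x + θ * M x) (ENNReal.ofReal q) μ := fun θ =>
    hZ.add (hM.const_mul θ)
  -- measurability facts
  have habs_cont : Continuous fun t : ℝ => |t| ^ q :=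
    continuous_abs.rpow_const fun t => Or.inr hq0.le
  have hF_meas : ∀ θ : ℝ, AEStronglyMeasurable (fun x => |Z x + θ * M x| ^ q) μ := fun θ =>
    habs_cont.comp_aestronglyMeasurable (hu θ).1
  have hF_int : ∀ θ : ℝ, Integrable (fun x => |Z x + θ * M x| ^ q) μ := by
    intro θ
    have := (hu θ).integrable_norm_rpow hqne hqtop
    simpa [Real.norm_eq_abs, hq_toReal] using this
  have hcontF' : Continuous fun t : ℝ => q * |t| ^ (q - 2) * t := by
    have h1 : Continuous fun t : ℝ => |t| ^ (q - 2) :=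
      continuous_abs.rpow_const fun t => Or.inr (by linarith)
    exact (continuous_const.mul h1).mul continuous_id
  have hF'_meas : ∀ θ : ℝ, AEStronglyMeasurable
      (fun x => q * |Z x + θ * M x| ^ (q - 2) * (Z x + θ * M x) * M x) μ := fun θ =>
    (hcontF'.comp_aestronglyMeasurable (hu θ).1).mul hM.1
  -- the integrable bound
  have hG : MemLp (fun x => |Z x| + c * |M x|) (ENNReal.ofReal q) μ := by
    have h1 : MemLp (fun x => |Z x|) (ENNReal.ofReal q) μ := hZ.norm
    have h2 : MemLp (fun x => c * |M x|) (ENNReal.ofReal q) μ := hM.norm.const_mul c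
    exact h1.add h2
  have hH : MemLp (fun x => (|Z x| + c * |M x|) ^ (q - 1))
      (ENNReal.ofReal q / ENNReal.ofReal (q - 1)) μ := by
    have h := hG.norm_rpow_div (ENNReal.ofReal (q - 1))
    have heq : (fun x => ‖|Z x| + c * |M x|‖ ^ ((ENNReal.ofReal (q - 1)).toReal))
        = fun x => (|Z x| + c * |M x|) ^ (q - 1) := by
      funext x
      rw [Real.norm_eq_abs, abs_of_nonneg (by positivity), ENNReal.toReal_ofReal hq1'.le]
    exact heq ▸ h
  have harith : (1 : ℝ≥0∞) / 1
      = 1 / (ENNReal.ofReal q / ENNReal.ofReal (q - 1)) + 1 / ENNReal.ofReal q := by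
    rw [← ENNReal.ofReal_div_of_pos hq1', one_div, one_div, one_div,
      ← ENNReal.ofReal_inv_of_pos (by positivity : (0:ℝ) < q / (q - 1)),
      ← ENNReal.ofReal_inv_of_pos hq0,
      ← ENNReal.ofReal_add (by positivity) (by positivity),
      show ((q / (q - 1))⁻¹ + q⁻¹ : ℝ) = 1 by (field_simp; ring), ENNReal.ofReal_one, inv_one]
  have hHM : MemLp (fun x => (|Z x| + c * |M x|) ^ (q - 1) * |M x|) 1 μ := by
    have := MemLp.smul (f := fun x => |M x|) (φ := fun x => (|Z x| + c * |M x|) ^ (q - 1))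
      hM.norm hH (r := 1) (hpqr := ⟨by simpa [one_div] using harith.symm⟩)
    exact this
  have hbound_int : Integrable (fun x => q * ((|Z x| + c * |M x|) ^ (q - 1) * |M x|)) μ :=
    (memLp_one_iff_integrable.mp hHM).const_mul q
  -- pointwise abs-power identity
  have habs : ∀ u : ℝ, |u| ^ (q - 2) * |u| = |u| ^ (q - 1) := by
    intro u
    rcases eq_or_ne u 0 with h | h
    · simp [h, Real.zero_rpow (by linarith : q - 1 ≠ 0)]
    · rw [show q - 1 = q - 2 + 1 by ring, Real.rpow_add (abs_pos.mpr h), Real.rpow_one]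
  -- bound on the derivative over the ball
  have h_bound : ∀ᵐ x ∂μ, ∀ θ ∈ Metric.ball θ₀ 1,
      ‖q * |Z x + θ * M x| ^ (q - 2) * (Z x + θ * M x) * M x‖
        ≤ q * ((|Z x| + c * |M x|) ^ (q - 1) * |M x|) := by
    refine Filter.Eventually.of_forall fun x θ hθ => ?_
    have hθle : |θ| ≤ c := by
      have := abs_sub_abs_le_abs_sub θ θ₀
      have h2 : |θ - θ₀| < 1 := by simpa [Real.dist_eq] using hθ
      simp only [hc]; linarith
    set u := Z x + θ * M x with hu_def
    have h1 : |u| ≤ |Z x| + c * |M x| := by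
      calc |u| ≤ |Z x| + |θ * M x| := abs_add_le _ _
        _ = |Z x| + |θ| * |M x| := by rw [abs_mul]
        _ ≤ |Z x| + c * |M x| := by
            have := mul_le_mul_of_nonneg_right hθle (abs_nonneg (M x)); linarith
    have h2 : |u| ^ (q - 1) ≤ (|Z x| + c * |M x|) ^ (q - 1) :=
      Real.rpow_le_rpow (abs_nonneg u) h1 (by linarith)
    have : ‖q * |u| ^ (q - 2) * u * M x‖ = q * |u| ^ (q - 1) * |M x| := by
      rw [Real.norm_eq_abs, abs_mul, abs_mul, abs_mul, abs_of_nonneg hq0.le,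
        abs_of_nonneg (Real.rpow_nonneg (abs_nonneg u) _), mul_assoc q, habs u]
    rw [this]
    have hM0 : (0:ℝ) ≤ |M x| := abs_nonneg _
    calc q * |u| ^ (q - 1) * |M x| ≤ q * (|Z x| + c * |M x|) ^ (q - 1) * |M x| := by
          apply mul_le_mul_of_nonneg_right (mul_le_mul_of_nonneg_left h2 hq0.le) hM0
      _ = q * ((|Z x| + c * |M x|) ^ (q - 1) * |M x|) := by ring
  -- differentiability in θ of the integrand
  have h_diff : ∀ᵐ x ∂μ, ∀ θ ∈ Metric.ball θ₀ 1,
      HasDerivAt (fun θ' => |Z x + θ' * M x| ^ q)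
        (q * |Z x + θ * M x| ^ (q - 2) * (Z x + θ * M x) * M x) θ := by
    refine Filter.Eventually.of_forall fun x θ _ => ?_
    have hinner : HasDerivAt (fun θ' : ℝ => Z x + θ' * M x) (M x) θ :=
      (hasDerivAt_mul_const (M x)).const_add (Z x)
    have houter := hasDerivAt_abs_rpow (Z x + θ * M x) hq1
    exact houter.comp θ hinner
  -- differentiate under the integral
  have key := hasDerivAt_integral_of_dominated_loc_of_deriv_le (μ := μ)
    (F := fun θ x => |Z x + θ * M x| ^ q)
    (F' := fun θ x => q * |Z x + θ * M x| ^ (q - 2) * (Z x + θ * M x) * M x)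
    (bound := fun x => q * ((|Z x| + c * |M x|) ^ (q - 1) * |M x|))
    (Metric.ball_mem_nhds θ₀ one_pos) (Filter.Eventually.of_forall fun θ => hF_meas θ) (hF_int θ₀) (hF'_meas θ₀)
    h_bound hbound_int h_diff
  have hψ : HasDerivAt (fun θ => ∫ x, |Z x + θ * M x| ^ q ∂μ)
      (q * ∫ x, |Z x + θ₀ * M x| ^ (q - 2) * (Z x + θ₀ * M x) * M x ∂μ) θ₀ := by
    have h2 := key.2
    have heq : (fun x => q * |Z x + θ₀ * M x| ^ (q - 2) * (Z x + θ₀ * M x) * M x)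
        = fun x => q * (|Z x + θ₀ * M x| ^ (q - 2) * (Z x + θ₀ * M x) * M x) := by
      funext x; ring
    rwa [heq, integral_const_mul] at h2
  -- positivity of the L^q norm
  set A := ∫ x, |Z x + θ₀ * M x| ^ q ∂μ with hA
  have hA0 : 0 ≤ A := integral_nonneg fun x => Real.rpow_nonneg (abs_nonneg _) _
  have hApos : 0 < A := by
    rcases hA0.lt_or_eq with h | h
    · exact h
    · exfalso; apply hne
      rw [← h, Real.zero_rpow (by positivity : (1:ℝ)/q ≠ 0)]
  -- chain rule for the outer power
  have main := hψ.rpow_const (p := p / q) (Or.inl hApos.ne')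
  -- rewrite the function
  have fe : (fun θ : ℝ => ((∫ x, |Z x + θ * M x| ^ q ∂μ) ^ (1 / q)) ^ p)
      = fun θ : ℝ => (∫ x, |Z x + θ * M x| ^ q ∂μ) ^ (p / q) := by
    funext θ
    have h0 : 0 ≤ ∫ x, |Z x + θ * M x| ^ q ∂μ :=
      integral_nonneg fun x => Real.rpow_nonneg (abs_nonneg _) _
    rw [← Real.rpow_mul h0]
    congr 1
    field_simp
  rw [fe]
  have hrw : (A ^ ((1:ℝ) / q)) ^ (p - q) = A ^ (p / q - 1) := by
    rw [← Real.rpow_mul hA0]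
    congr 1
    field_simp
  have hderiv_eq : p * (A ^ ((1:ℝ) / q)) ^ (p - q)
        * (∫ x, |Z x + θ₀ * M x| ^ (q - 2) * (Z x + θ₀ * M x) * M x ∂μ)
      = (q * ∫ x, |Z x + θ₀ * M x| ^ (q - 2) * (Z x + θ₀ * M x) * M x ∂μ)
        * (p / q) * A ^ (p / q - 1) := by
    rw [hrw]
    field_simp
  rw [hderiv_eq]
  exact main
end

section
/- Assume ‖Z + θM‖_{L^q} > 0 for every θ ∈ [0,1]. Then ‖Z + M‖_{L^q}^p ≤ ‖Z‖_{L^q}^p + p ‖Z‖_{L^q}^{p−q} ⟨|Z|^{q−2}Z, M⟩ + p|p−q| ∫₀¹ ‖Z + θM‖_{L^q}^{p−2q} ⟨|Z + θM|^{q−2}(Z + θM), M⟩² dθ + p(q−1) ∫₀¹ ‖Z + θM‖_{L^q}^{p−q} ⟨|Z + θM|^{q−2}, M²⟩ dθ. (This is the second-order Taylor inequality for g(θ) = ‖Z + θM‖_{L^q}^p used to control the discrete stochastic convolution.) -/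
open MeasureTheory Real Set Filter
open scoped ENNReal

private lemma aux_rpow_mul_self {q : ℝ} (hq1 : 1 < q) {a : ℝ} (ha : 0 ≤ a) :
    a ^ (q - 2) * a = a ^ (q - 1) := by
  rcases eq_or_lt_of_le ha with h | h
  · rw [← h, Real.zero_rpow (by linarith : q - 1 ≠ 0), mul_zero]
  · rw [show q - 1 = (q - 2) + 1 by ring, Real.rpow_add_one h.ne']

private lemma aux_hasDerivAt_abs_rpow {q : ℝ} (hq : 2 ≤ q) (t : ℝ) :
    HasDerivAt (fun s : ℝ => |s| ^ q) (q * (|t| ^ (q - 2) * t)) t := by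
  have hq1 : (1:ℝ) < q := by linarith
  rcases lt_trichotomy t 0 with ht | rfl | ht
  · have hneg : (0:ℝ) < -t := by linarith
    have haff : HasDerivAt (fun s : ℝ => -s) (-1) t := hasDerivAt_neg t
    have h1 : HasDerivAt (fun s : ℝ => (-s) ^ q) ((q * (-t) ^ (q - 1)) * (-1)) t :=
      (Real.hasDerivAt_rpow_const (p := q) (Or.inl hneg.ne')).comp t haff
    have heq : (fun s : ℝ => |s| ^ q) =ᶠ[nhds t] fun s => (-s) ^ q :=
      Filter.eventuallyEq_of_mem (Iio_mem_nhds ht) fun s hs => by rw [abs_of_neg hs]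
    have h2 := h1.congr_of_eventuallyEq heq
    refine h2.congr_deriv ?_
    rw [abs_of_neg ht, show q - 1 = (q - 2) + 1 by ring, Real.rpow_add_one hneg.ne']
    ring
  · rw [hasDerivAt_iff_tendsto_slope]
    have hval : q * (|(0:ℝ)| ^ (q - 2) * 0) = 0 := by ring
    rw [hval]
    apply squeeze_zero_norm' (a := fun s : ℝ => |s| ^ (q - 1))
    · filter_upwards [self_mem_nhdsWithin] with s hs
      have hs' : s ≠ 0 := hs
      have habs : (0:ℝ) < |s| := abs_pos.mpr hs'
      rw [slope_def_field]
      have : (|s| ^ q - |(0:ℝ)| ^ q) / (s - 0) = |s| ^ q / s := by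
        rw [abs_zero, Real.zero_rpow (by linarith : q ≠ 0), sub_zero, sub_zero]
      rw [this, norm_div, Real.norm_eq_abs, Real.norm_eq_abs,
        abs_of_nonneg (Real.rpow_nonneg (abs_nonneg s) q),
        Real.rpow_sub habs, Real.rpow_one]
    · have hc : Continuous fun s : ℝ => |s| ^ (q - 1) :=
        continuous_abs.rpow_const fun _ => Or.inr (by linarith)
      have := (hc.tendsto 0).mono_left (nhdsWithin_le_nhds (s := {(0:ℝ)}ᶜ))
      simpa [Real.zero_rpow (by linarith : q - 1 ≠ 0)] using this
  · have haff : HasDerivAt (fun s : ℝ => s) 1 t := hasDerivAt_id t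
    have h1 : HasDerivAt (fun s : ℝ => s ^ q) (q * t ^ (q - 1)) t :=
      Real.hasDerivAt_rpow_const (p := q) (Or.inl ht.ne')
    have heq : (fun s : ℝ => |s| ^ q) =ᶠ[nhds t] fun s => s ^ q :=
      Filter.eventuallyEq_of_mem (Ioi_mem_nhds ht) fun s hs => by
        rw [abs_of_pos hs]
    have h2 := h1.congr_of_eventuallyEq heq
    refine h2.congr_deriv ?_
    rw [abs_of_pos ht, show q - 1 = (q - 2) + 1 by ring, Real.rpow_add_one ht.ne']

private lemma aux_hasDerivAt_abs_rpow_mul {q : ℝ} (hq : 2 ≤ q) (t : ℝ) :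
    HasDerivAt (fun s : ℝ => |s| ^ (q - 2) * s) ((q - 1) * |t| ^ (q - 2)) t := by
  rcases lt_trichotomy t 0 with ht | rfl | ht
  · have hneg : (0:ℝ) < -t := by linarith
    have haff : HasDerivAt (fun s : ℝ => -s) (-1) t := hasDerivAt_neg t
    have hpow : HasDerivAt (fun s : ℝ => (-s) ^ (q - 2))
        (((q - 2) * (-t) ^ (q - 2 - 1)) * (-1)) t :=
      (Real.hasDerivAt_rpow_const (p := q - 2) (Or.inl hneg.ne')).comp t haff
    have h1 := hpow.mul (hasDerivAt_id t)
    have heq : (fun s : ℝ => |s| ^ (q - 2) * s) =ᶠ[nhds t] fun s => (-s) ^ (q - 2) * s :=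
      Filter.eventuallyEq_of_mem (Iio_mem_nhds ht) fun s hs => by rw [abs_of_neg hs]
    have h2 := h1.congr_of_eventuallyEq heq
    refine h2.congr_deriv ?_
    have key : (-t) ^ (q - 2) = (-t) ^ (q - 2 - 1) * (-t) := by
      rw [← Real.rpow_add_one hneg.ne']; congr 1; ring
    rw [abs_of_neg ht, key]
    simp only [id_eq]
    ring
  · rcases eq_or_lt_of_le hq with hq2 | hq2
    · have hfun : (fun s : ℝ => |s| ^ (q - 2) * s) = fun s : ℝ => s := by
        funext s
        rw [← hq2, sub_self, Real.rpow_zero, one_mul]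
      rw [hfun]
      have : (q - 1) * |(0:ℝ)| ^ (q - 2) = 1 := by
        rw [← hq2, sub_self, Real.rpow_zero]; norm_num
      rw [this]
      exact hasDerivAt_id 0
    · rw [hasDerivAt_iff_tendsto_slope]
      have hval : (q - 1) * |(0:ℝ)| ^ (q - 2) = 0 := by
        rw [abs_zero, Real.zero_rpow (by linarith : q - 2 ≠ 0), mul_zero]
      rw [hval]
      apply squeeze_zero_norm' (a := fun s : ℝ => |s| ^ (q - 2))
      · filter_upwards [self_mem_nhdsWithin] with s hs
        have hs' : s ≠ 0 := hs
        rw [slope_def_field]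
        have : (|s| ^ (q - 2) * s - |(0:ℝ)| ^ (q - 2) * 0) / (s - 0) = |s| ^ (q - 2) := by
          rw [mul_zero, sub_zero, sub_zero, mul_div_assoc, div_self hs', mul_one]
        rw [this, Real.norm_eq_abs, abs_of_nonneg (Real.rpow_nonneg (abs_nonneg s) _)]
      · have hc : Continuous fun s : ℝ => |s| ^ (q - 2) :=
          continuous_abs.rpow_const fun _ => Or.inr (by linarith)
        have := (hc.tendsto 0).mono_left (nhdsWithin_le_nhds (s := {(0:ℝ)}ᶜ))
        simpa [Real.zero_rpow (by linarith : q - 2 ≠ 0)] using this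
  · have hpow : HasDerivAt (fun s : ℝ => s ^ (q - 2)) ((q - 2) * t ^ (q - 2 - 1)) t :=
      Real.hasDerivAt_rpow_const (p := q - 2) (Or.inl ht.ne')
    have h1 := hpow.mul (hasDerivAt_id t)
    have heq : (fun s : ℝ => |s| ^ (q - 2) * s) =ᶠ[nhds t] fun s => s ^ (q - 2) * s :=
      Filter.eventuallyEq_of_mem (Ioi_mem_nhds ht) fun s hs => by rw [abs_of_pos hs]
    have h2 := h1.congr_of_eventuallyEq heq
    refine h2.congr_deriv ?_
    have key : t ^ (q - 2) = t ^ (q - 2 - 1) * t := by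
      rw [← Real.rpow_add_one ht.ne']; congr 1; ring
    rw [abs_of_pos ht, key]
    simp only [id_eq]
    ring

private lemma aux_comp1 {q : ℝ} (hq : 2 ≤ q) (z m θ : ℝ) :
    HasDerivAt (fun s : ℝ => |z + s * m| ^ q)
      (q * (|z + θ * m| ^ (q - 2) * (z + θ * m) * m)) θ := by
  have haff : HasDerivAt (fun s : ℝ => z + s * m) m θ := by
    simpa using ((hasDerivAt_id θ).mul_const m).const_add z
  have h := (aux_hasDerivAt_abs_rpow hq (z + θ * m)).comp θ haff
  have h2 : HasDerivAt (fun s : ℝ => |z + s * m| ^ q)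
      ((q * (|z + θ * m| ^ (q - 2) * (z + θ * m))) * m) θ := h
  convert h2 using 1
  ring

private lemma aux_comp2 {q : ℝ} (hq : 2 ≤ q) (z m θ : ℝ) :
    HasDerivAt (fun s : ℝ => |z + s * m| ^ (q - 2) * (z + s * m) * m)
      ((q - 1) * (|z + θ * m| ^ (q - 2) * m ^ 2)) θ := by
  have haff : HasDerivAt (fun s : ℝ => z + s * m) m θ := by
    simpa using ((hasDerivAt_id θ).mul_const m).const_add z
  have h := ((aux_hasDerivAt_abs_rpow_mul hq (z + θ * m)).comp θ haff).mul_const m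
  have h2 : HasDerivAt (fun s : ℝ => |z + s * m| ^ (q - 2) * (z + s * m) * m)
      ((((q - 1) * |z + θ * m| ^ (q - 2)) * m) * m) θ := h
  convert h2 using 1
  ring

private lemma aux_integrable_mul {S : Type*} [MeasurableSpace S] {μ : Measure S} {q r s : ℝ}
    (hq : 0 < q) (hr : 0 ≤ r) (hs : 0 ≤ s) (hrs : r + s = q)
    {W V : S → ℝ} (hW : MemLp W (ENNReal.ofReal q) μ) (hV : MemLp V (ENNReal.ofReal q) μ) :
    Integrable (fun x => |W x| ^ r * |V x| ^ s) μ := by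
  have h1 := hW.norm_rpow_div (ENNReal.ofReal r)
  have h2 := hV.norm_rpow_div (ENNReal.ofReal s)
  rw [ENNReal.toReal_ofReal hr] at h1
  rw [ENNReal.toReal_ofReal hs] at h2
  have hQ0 : ENNReal.ofReal q ≠ 0 := by
    simp only [ne_eq, ENNReal.ofReal_eq_zero, not_le]; exact hq
  have hQt : ENNReal.ofReal q ≠ ⊤ := ENNReal.ofReal_ne_top
  have hcond : (1:ℝ≥0∞) / 1 =
      1 / (ENNReal.ofReal q / ENNReal.ofReal r) +
      1 / (ENNReal.ofReal q / ENNReal.ofReal s) := by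
    rw [one_div, one_div, one_div, inv_one,
      ENNReal.inv_div (Or.inr hQt) (Or.inr hQ0),
      ENNReal.inv_div (Or.inr hQt) (Or.inr hQ0),
      ENNReal.div_add_div_same, ← ENNReal.ofReal_add hr hs, hrs,
      ENNReal.div_self hQ0 hQt]
  have h3 := h2.smul (r := 1) h1 (hpqr := ⟨by simpa only [one_div] using hcond.symm⟩)
  rw [memLp_one_iff_integrable] at h3
  have h4 : ((fun x => ‖W x‖ ^ r) • fun x => ‖V x‖ ^ s) =
      fun x => |W x| ^ r * |V x| ^ s := by
    funext x
    simp [Real.norm_eq_abs, smul_eq_mul]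
  rwa [h4] at h3

private lemma aux_memW {S : Type*} [MeasurableSpace S] {μ : Measure S} {q : ℝ}
    {Z M : S → ℝ} (hZ : MemLp Z (ENNReal.ofReal q) μ) (hM : MemLp M (ENNReal.ofReal q) μ)
    (C : ℝ) : MemLp (fun x => |Z x| + C * |M x|) (ENNReal.ofReal q) μ := by
  have h := hZ.norm.add ((hM.norm).const_mul C)
  have : ((fun x => ‖Z x‖) + fun x => C * ‖M x‖) = fun x => |Z x| + C * |M x| := by
    funext x; simp [Real.norm_eq_abs]
  rwa [this] at h

private lemma aux_abs_le {θ C z m : ℝ} (hθ : |θ| ≤ C) : |z + θ * m| ≤ |z| + C * |m| := by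
  calc |z + θ * m| ≤ |z| + |θ * m| := abs_add_le _ _
    _ = |z| + |θ| * |m| := by rw [abs_mul]
    _ ≤ |z| + C * |m| := by
        have := mul_le_mul_of_nonneg_right hθ (abs_nonneg m)
        linarith

private lemma aux_meas_u {S : Type*} [MeasurableSpace S] {μ : Measure S} {q : ℝ}
    {Z M : S → ℝ} (hZ : MemLp Z (ENNReal.ofReal q) μ) (hM : MemLp M (ENNReal.ofReal q) μ)
    (θ : ℝ) : AEMeasurable (fun x => Z x + θ * M x) μ :=
  hZ.1.aemeasurable.add (hM.1.aemeasurable.const_mul θ)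

private lemma aux_meas_pow {S : Type*} [MeasurableSpace S] {μ : Measure S} {c : ℝ}
    (hc : 0 ≤ c) {f : S → ℝ} (h : AEMeasurable f μ) :
    AEMeasurable (fun x => |f x| ^ c) μ :=
  ((continuous_abs.rpow_const fun _ => Or.inr hc).measurable).comp_aemeasurable h

private lemma aux_int_A {S : Type*} [MeasurableSpace S] {μ : Measure S} {q : ℝ} (hq : 2 ≤ q)
    {Z M : S → ℝ} (hZ : MemLp Z (ENNReal.ofReal q) μ) (hM : MemLp M (ENNReal.ofReal q) μ)
    {θ C : ℝ} (hθC : |θ| ≤ C) :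
    Integrable (fun x => |Z x + θ * M x| ^ (q - 2) * (Z x + θ * M x) * M x) μ := by
  have hq0 : (0:ℝ) < q := by linarith
  have hint := aux_integrable_mul hq0 (by linarith : (0:ℝ) ≤ q - 1) zero_le_one
    (by ring) (aux_memW hZ hM C) hM
  refine hint.mono' ?_ (Filter.Eventually.of_forall fun x => ?_)
  · have hu := aux_meas_u hZ hM θ
    exact (((aux_meas_pow (by linarith : (0:ℝ) ≤ q - 2) hu).mul hu).mul
      hM.1.aemeasurable).aestronglyMeasurable
  · have hWnn : 0 ≤ |Z x| + C * |M x| :=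
      add_nonneg (abs_nonneg _) (mul_nonneg (le_trans (abs_nonneg θ) hθC) (abs_nonneg _))
    rw [Real.norm_eq_abs, abs_mul, abs_mul,
      abs_of_nonneg (Real.rpow_nonneg (abs_nonneg _) _), abs_of_nonneg hWnn, Real.rpow_one]
    rw [aux_rpow_mul_self (by linarith : (1:ℝ) < q) (abs_nonneg _)]
    exact mul_le_mul_of_nonneg_right
      (Real.rpow_le_rpow (abs_nonneg _) (aux_abs_le hθC) (by linarith)) (abs_nonneg _)

private lemma aux_int_B {S : Type*} [MeasurableSpace S] {μ : Measure S} {q : ℝ} (hq : 2 ≤ q)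
    {Z M : S → ℝ} (hZ : MemLp Z (ENNReal.ofReal q) μ) (hM : MemLp M (ENNReal.ofReal q) μ)
    {θ C : ℝ} (hθC : |θ| ≤ C) :
    Integrable (fun x => |Z x + θ * M x| ^ (q - 2) * (M x) ^ 2) μ := by
  have hq0 : (0:ℝ) < q := by linarith
  have hint := aux_integrable_mul hq0 (by linarith : (0:ℝ) ≤ q - 2) zero_le_two
    (by ring) (aux_memW hZ hM C) hM
  refine hint.mono' ?_ (Filter.Eventually.of_forall fun x => ?_)
  · have hu := aux_meas_u hZ hM θ
    exact ((aux_meas_pow (by linarith : (0:ℝ) ≤ q - 2) hu).mul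
      (hM.1.aemeasurable.pow_const 2)).aestronglyMeasurable
  · have hWnn : 0 ≤ |Z x| + C * |M x| :=
      add_nonneg (abs_nonneg _) (mul_nonneg (le_trans (abs_nonneg θ) hθC) (abs_nonneg _))
    rw [Real.norm_eq_abs, abs_mul,
      abs_of_nonneg (Real.rpow_nonneg (abs_nonneg _) _), abs_of_nonneg hWnn]
    have h2 : |(M x) ^ 2| = |M x| ^ (2:ℝ) := by
      rw [abs_of_nonneg (sq_nonneg _), ← sq_abs, ← Real.rpow_natCast |M x| 2]
      norm_num
    rw [h2]
    exact mul_le_mul_of_nonneg_right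
      (Real.rpow_le_rpow (abs_nonneg _) (aux_abs_le hθC) (by linarith))
      (Real.rpow_nonneg (abs_nonneg _) _)

private lemma aux_ptbound1 {q : ℝ} (hq : 2 ≤ q) {θ C z m : ℝ} (hθC : |θ| ≤ C) :
    ‖|z + θ * m| ^ (q - 2) * (z + θ * m) * m‖ ≤ |(|z| + C * |m|)| ^ (q - 1) * |m| ^ (1:ℝ) := by
  have hWnn : 0 ≤ |z| + C * |m| :=
    add_nonneg (abs_nonneg _) (mul_nonneg (le_trans (abs_nonneg θ) hθC) (abs_nonneg _))
  rw [Real.norm_eq_abs, abs_mul, abs_mul,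
    abs_of_nonneg (Real.rpow_nonneg (abs_nonneg _) _), abs_of_nonneg hWnn, Real.rpow_one]
  rw [aux_rpow_mul_self (by linarith : (1:ℝ) < q) (abs_nonneg _)]
  exact mul_le_mul_of_nonneg_right
    (Real.rpow_le_rpow (abs_nonneg _) (aux_abs_le hθC) (by linarith)) (abs_nonneg _)

private lemma aux_ptbound2 {q : ℝ} (hq : 2 ≤ q) {θ C z m : ℝ} (hθC : |θ| ≤ C) :
    ‖|z + θ * m| ^ (q - 2) * m ^ 2‖ ≤ |(|z| + C * |m|)| ^ (q - 2) * |m| ^ (2:ℝ) := by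
  have hWnn : 0 ≤ |z| + C * |m| :=
    add_nonneg (abs_nonneg _) (mul_nonneg (le_trans (abs_nonneg θ) hθC) (abs_nonneg _))
  rw [Real.norm_eq_abs, abs_mul,
    abs_of_nonneg (Real.rpow_nonneg (abs_nonneg _) _), abs_of_nonneg hWnn]
  have h2 : |m ^ 2| = |m| ^ (2:ℝ) := by
    rw [abs_of_nonneg (sq_nonneg _), ← sq_abs, ← Real.rpow_natCast |m| 2]
    norm_num
  rw [h2]
  exact mul_le_mul_of_nonneg_right
    (Real.rpow_le_rpow (abs_nonneg _) (aux_abs_le hθC) (by linarith))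
    (Real.rpow_nonneg (abs_nonneg _) _)

private lemma aux_int_F {S : Type*} [MeasurableSpace S] {μ : Measure S} {q : ℝ} (hq : 2 ≤ q)
    {Z M : S → ℝ} (hZ : MemLp Z (ENNReal.ofReal q) μ) (hM : MemLp M (ENNReal.ofReal q) μ)
    (θ : ℝ) : Integrable (fun x => |Z x + θ * M x| ^ q) μ := by
  have hu : MemLp (fun x => Z x + θ * M x) (ENNReal.ofReal q) μ := hZ.add (hM.const_mul θ)
  have h := hu.integrable_norm_rpow (by simp only [ne_eq, ENNReal.ofReal_eq_zero, not_le]; linarith)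
    ENNReal.ofReal_ne_top
  rw [ENNReal.toReal_ofReal (by linarith : (0:ℝ) ≤ q)] at h
  simpa [Real.norm_eq_abs] using h

private lemma aux_hasDerivAt_F {S : Type*} [MeasurableSpace S] {μ : Measure S} {q : ℝ}
    (hq : 2 ≤ q) {Z M : S → ℝ}
    (hZ : MemLp Z (ENNReal.ofReal q) μ) (hM : MemLp M (ENNReal.ofReal q) μ) (θ₀ : ℝ) :
    HasDerivAt (fun θ => ∫ x, |Z x + θ * M x| ^ q ∂μ)
      (q * ∫ x, |Z x + θ₀ * M x| ^ (q - 2) * (Z x + θ₀ * M x) * M x ∂μ) θ₀ := by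
  set C := |θ₀| + 1 with hCdef
  have hball : ∀ θ ∈ Metric.ball θ₀ 1, |θ| ≤ C := by
    intro θ hθ
    rw [Metric.mem_ball, Real.dist_eq] at hθ
    calc |θ| = |θ - θ₀ + θ₀| := by ring_nf
      _ ≤ |θ - θ₀| + |θ₀| := abs_add_le _ _
      _ ≤ C := by rw [hCdef]; linarith
  have key := hasDerivAt_integral_of_dominated_loc_of_deriv_le
    (F := fun θ x => |Z x + θ * M x| ^ q)
    (F' := fun θ x => q * (|Z x + θ * M x| ^ (q - 2) * (Z x + θ * M x) * M x))
    (bound := fun x => q * (|(|Z x| + C * |M x|)| ^ (q - 1) * |M x| ^ (1:ℝ)))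
    (Metric.ball_mem_nhds θ₀ zero_lt_one)
    (Filter.Eventually.of_forall fun θ =>
      (aux_meas_pow (by linarith : (0:ℝ) ≤ q) (aux_meas_u hZ hM θ)).aestronglyMeasurable)
    (aux_int_F hq hZ hM θ₀)
    (by
      have hu := aux_meas_u hZ hM θ₀
      exact ((((aux_meas_pow (by linarith : (0:ℝ) ≤ q - 2) hu).mul hu).mul
        hM.1.aemeasurable).const_mul q).aestronglyMeasurable)
    (Filter.Eventually.of_forall fun x θ hθ => by
      rw [norm_mul, Real.norm_eq_abs q, abs_of_nonneg (by linarith : (0:ℝ) ≤ q)]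
      exact mul_le_mul_of_nonneg_left (aux_ptbound1 hq (hball θ hθ)) (by linarith))
    ((aux_integrable_mul (by linarith : (0:ℝ) < q) (by linarith : (0:ℝ) ≤ q - 1) zero_le_one
      (by ring) (aux_memW hZ hM C) hM).const_mul q)
    (Filter.Eventually.of_forall fun x θ _ => aux_comp1 hq (Z x) (M x) θ)
  have h2 := key.2
  rwa [integral_const_mul] at h2

private lemma aux_hasDerivAt_A {S : Type*} [MeasurableSpace S] {μ : Measure S} {q : ℝ}
    (hq : 2 ≤ q) {Z M : S → ℝ}
    (hZ : MemLp Z (ENNReal.ofReal q) μ) (hM : MemLp M (ENNReal.ofReal q) μ) (θ₀ : ℝ) :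
    HasDerivAt (fun θ => ∫ x, |Z x + θ * M x| ^ (q - 2) * (Z x + θ * M x) * M x ∂μ)
      ((q - 1) * ∫ x, |Z x + θ₀ * M x| ^ (q - 2) * (M x) ^ 2 ∂μ) θ₀ := by
  set C := |θ₀| + 1 with hCdef
  have hball : ∀ θ ∈ Metric.ball θ₀ 1, |θ| ≤ C := by
    intro θ hθ
    rw [Metric.mem_ball, Real.dist_eq] at hθ
    calc |θ| = |θ - θ₀ + θ₀| := by ring_nf
      _ ≤ |θ - θ₀| + |θ₀| := abs_add_le _ _
      _ ≤ C := by rw [hCdef]; linarith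
  have key := hasDerivAt_integral_of_dominated_loc_of_deriv_le
    (F := fun θ x => |Z x + θ * M x| ^ (q - 2) * (Z x + θ * M x) * M x)
    (F' := fun θ x => (q - 1) * (|Z x + θ * M x| ^ (q - 2) * (M x) ^ 2))
    (bound := fun x => (q - 1) * (|(|Z x| + C * |M x|)| ^ (q - 2) * |M x| ^ (2:ℝ)))
    (Metric.ball_mem_nhds θ₀ zero_lt_one)
    (Filter.Eventually.of_forall fun θ => by
      have hu := aux_meas_u hZ hM θ
      exact (((aux_meas_pow (by linarith : (0:ℝ) ≤ q - 2) hu).mul hu).mul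
        hM.1.aemeasurable).aestronglyMeasurable)
    (aux_int_A hq hZ hM (le_of_lt (by rw [hCdef]; linarith : |θ₀| < C)))
    (by
      have hu := aux_meas_u hZ hM θ₀
      exact (((aux_meas_pow (by linarith : (0:ℝ) ≤ q - 2) hu).mul
        (hM.1.aemeasurable.pow_const 2)).const_mul (q - 1)).aestronglyMeasurable)
    (Filter.Eventually.of_forall fun x θ hθ => by
      rw [norm_mul, Real.norm_eq_abs (q - 1), abs_of_nonneg (by linarith : (0:ℝ) ≤ q - 1)]
      exact mul_le_mul_of_nonneg_left (aux_ptbound2 hq (hball θ hθ)) (by linarith))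
    ((aux_integrable_mul (by linarith : (0:ℝ) < q) (by linarith : (0:ℝ) ≤ q - 2) zero_le_two
      (by ring) (aux_memW hZ hM C) hM).const_mul (q - 1))
    (Filter.Eventually.of_forall fun x θ _ => aux_comp2 hq (Z x) (M x) θ)
  have h2 := key.2
  rwa [integral_const_mul] at h2

private lemma aux_cont_B {S : Type*} [MeasurableSpace S] {μ : Measure S} {q : ℝ}
    (hq : 2 ≤ q) {Z M : S → ℝ}
    (hZ : MemLp Z (ENNReal.ofReal q) μ) (hM : MemLp M (ENNReal.ofReal q) μ) :
    Continuous fun θ : ℝ => ∫ x, |Z x + θ * M x| ^ (q - 2) * (M x) ^ 2 ∂μ := by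
  rw [continuous_iff_continuousAt]
  intro θ₀
  set C := |θ₀| + 1 with hCdef
  have hball : ∀ θ ∈ Metric.ball θ₀ 1, |θ| ≤ C := by
    intro θ hθ
    rw [Metric.mem_ball, Real.dist_eq] at hθ
    calc |θ| = |θ - θ₀ + θ₀| := by ring_nf
      _ ≤ |θ - θ₀| + |θ₀| := abs_add_le _ _
      _ ≤ C := by rw [hCdef]; linarith
  apply continuousAt_of_dominated
    (bound := fun x => |(|Z x| + C * |M x|)| ^ (q - 2) * |M x| ^ (2:ℝ))
  · exact Filter.Eventually.of_forall fun θ => by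
      have hu := aux_meas_u hZ hM θ
      exact ((aux_meas_pow (by linarith : (0:ℝ) ≤ q - 2) hu).mul
        (hM.1.aemeasurable.pow_const 2)).aestronglyMeasurable
  · refine Filter.eventually_of_mem (Metric.ball_mem_nhds θ₀ zero_lt_one) fun θ hθ => ?_
    exact Filter.Eventually.of_forall fun x => aux_ptbound2 hq (hball θ hθ)
  · exact aux_integrable_mul (by linarith : (0:ℝ) < q) (by linarith : (0:ℝ) ≤ q - 2) zero_le_two
      (by ring) (aux_memW hZ hM C) hM
  · refine Filter.Eventually.of_forall fun x => ?_
    have hc : Continuous fun θ : ℝ => |Z x + θ * M x| ^ (q - 2) * (M x) ^ 2 := by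
      apply Continuous.mul _ continuous_const
      exact (continuous_abs.rpow_const fun _ => Or.inr (by linarith)).comp
        (continuous_const.add (continuous_id.mul continuous_const))
    exact hc.continuousAt

/-- Second-order Taylor inequality for `g(θ) = ‖Z + θM‖_{L^q}^p`, used to control the
discrete stochastic convolution: if `‖Z + θM‖_{L^q} > 0` for every `θ ∈ [0,1]`, then
`‖Z + M‖^p ≤ ‖Z‖^p + p ‖Z‖^{p−q} ⟨|Z|^{q−2}Z, M⟩
  + p|p−q| ∫₀¹ ‖Z + θM‖^{p−2q} ⟨|Z + θM|^{q−2}(Z + θM), M⟩² dθ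
  + p(q−1) ∫₀¹ ‖Z + θM‖^{p−q} ⟨|Z + θM|^{q−2}, M²⟩ dθ`. -/
theorem lq_norm_pow_taylor_inequality
    (S : Type*) [MeasurableSpace S] (μ : Measure S) [SigmaFinite μ]
    (q p : ℝ) (hq2 : 2 ≤ q) (hp2 : 2 < p)
    (Z M : S → ℝ)
    (hZ : MemLp Z (ENNReal.ofReal q) μ) (hM : MemLp M (ENNReal.ofReal q) μ)
    (hpos : ∀ θ ∈ Set.Icc (0:ℝ) 1, 0 < (∫ x, |Z x + θ * M x| ^ q ∂μ) ^ (1 / q)) :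
    ((∫ x, |Z x + M x| ^ q ∂μ) ^ (1 / q)) ^ p ≤
      ((∫ x, |Z x| ^ q ∂μ) ^ (1 / q)) ^ p +
        p * ((∫ x, |Z x| ^ q ∂μ) ^ (1 / q)) ^ (p - q) *
          (∫ x, |Z x| ^ (q - 2) * Z x * M x ∂μ) +
        p * |p - q| *
          (∫ θ in (0:ℝ)..1,
            ((∫ x, |Z x + θ * M x| ^ q ∂μ) ^ (1 / q)) ^ (p - 2 * q) *
              (∫ x, |Z x + θ * M x| ^ (q - 2) * (Z x + θ * M x) * M x ∂μ) ^ 2) +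
        p * (q - 1) *
          (∫ θ in (0:ℝ)..1,
            ((∫ x, |Z x + θ * M x| ^ q ∂μ) ^ (1 / q)) ^ (p - q) *
              ∫ x, |Z x + θ * M x| ^ (q - 2) * (M x) ^ 2 ∂μ) := by
  have hq1 : (1:ℝ) < q := by linarith
  have hq0 : (0:ℝ) < q := by linarith
  have hp0 : (0:ℝ) < p := by linarith
  -- rewrite endpoint integrands into the parametric form
  have g1 : (fun x => |Z x + M x| ^ q) = fun x => |Z x + (1:ℝ) * M x| ^ q := by
    funext x; rw [one_mul]
  have g2 : (fun x => |Z x| ^ q) = fun x => |Z x + (0:ℝ) * M x| ^ q := by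
    funext x; rw [zero_mul, add_zero]
  have g3 : (fun x => |Z x| ^ (q - 2) * Z x * M x) =
      fun x => |Z x + (0:ℝ) * M x| ^ (q - 2) * (Z x + 0 * M x) * M x := by
    funext x; rw [zero_mul, add_zero]
  rw [g1, g2, g3]
  set F : ℝ → ℝ := fun θ => ∫ x, |Z x + θ * M x| ^ q ∂μ with hFdef
  set A : ℝ → ℝ := fun θ => ∫ x, |Z x + θ * M x| ^ (q - 2) * (Z x + θ * M x) * M x ∂μ with hAdef
  set B : ℝ → ℝ := fun θ => ∫ x, |Z x + θ * M x| ^ (q - 2) * (M x) ^ 2 ∂μ with hBdef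
  show ((F 1) ^ (1/q)) ^ p ≤ ((F 0) ^ (1/q)) ^ p + p * ((F 0) ^ (1/q)) ^ (p - q) * A 0 +
      p * |p - q| * (∫ θ in (0:ℝ)..1, ((F θ) ^ (1/q)) ^ (p - 2*q) * (A θ) ^ 2) +
      p * (q - 1) * (∫ θ in (0:ℝ)..1, ((F θ) ^ (1/q)) ^ (p - q) * B θ)
  have hFnn : ∀ θ, 0 ≤ F θ := fun θ =>
    integral_nonneg fun x => Real.rpow_nonneg (abs_nonneg _) q
  have hFpos : ∀ θ ∈ Icc (0:ℝ) 1, 0 < F θ := by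
    intro θ hθ
    rcases (hFnn θ).lt_or_eq with h | h
    · exact h
    · exfalso
      have h2 : (0:ℝ) < F θ ^ (1/q) := hpos θ hθ
      rw [← h, Real.zero_rpow (by positivity : 1/q ≠ 0)] at h2
      exact lt_irrefl 0 h2
  have hBnn : ∀ θ, 0 ≤ B θ := fun θ =>
    integral_nonneg fun x => mul_nonneg (Real.rpow_nonneg (abs_nonneg _) _) (sq_nonneg _)
  have hFderiv : ∀ θ, HasDerivAt F (q * A θ) θ := fun θ => aux_hasDerivAt_F hq2 hZ hM θ
  have hAderiv : ∀ θ, HasDerivAt A ((q - 1) * B θ) θ := fun θ => aux_hasDerivAt_A hq2 hZ hM θ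
  have hFcont : Continuous F :=
    continuous_iff_continuousAt.mpr fun θ => (hFderiv θ).continuousAt
  have hAcont : Continuous A :=
    continuous_iff_continuousAt.mpr fun θ => (hAderiv θ).continuousAt
  have hBcont : Continuous B := aux_cont_B hq2 hZ hM
  set G : ℝ → ℝ := fun θ => p * F θ ^ ((p - q)/q) * A θ with hGdef
  set G2 : ℝ → ℝ := fun θ =>
    p * (p - q) * (F θ ^ ((p - 2*q)/q) * A θ ^ 2) + p * (q - 1) * (F θ ^ ((p - q)/q) * B θ)
    with hG2def
  set bnd : ℝ → ℝ := fun θ =>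
    p * |p - q| * (F θ ^ ((p - 2*q)/q) * A θ ^ 2) + p * (q - 1) * (F θ ^ ((p - q)/q) * B θ)
    with hbnddef
  -- derivative of g = F ^ (p/q)
  have hgderiv : ∀ θ ∈ Icc (0:ℝ) 1, HasDerivAt (fun s => F s ^ (p/q)) (G θ) θ := by
    intro θ hθ
    have h := (hFderiv θ).rpow_const (p := p/q) (Or.inl (hFpos θ hθ).ne')
    have he : F θ ^ (p/q - 1) = F θ ^ ((p - q)/q) := by
      congr 1; field_simp
    rw [he] at h
    convert h using 1
    field_simp
    ring
  -- derivative of G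
  have hGderiv : ∀ θ ∈ Icc (0:ℝ) 1, HasDerivAt G (G2 θ) θ := by
    intro θ hθ
    have hpow := (hFderiv θ).rpow_const (p := (p - q)/q) (Or.inl (hFpos θ hθ).ne')
    have he : F θ ^ ((p - q)/q - 1) = F θ ^ ((p - 2*q)/q) := by
      congr 1; field_simp; ring
    rw [he] at hpow
    have h := (hpow.const_mul p).mul (hAderiv θ)
    refine h.congr_deriv ?_
    simp only [hG2def]
    field_simp
  -- continuity facts on Icc 0 1
  have hFpowco : ∀ c : ℝ, ContinuousOn (fun θ => F θ ^ c) (Icc (0:ℝ) 1) := fun c =>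
    hFcont.continuousOn.rpow_const fun x hx => Or.inl (hFpos x hx).ne'
  have hG2co : ContinuousOn G2 (Icc (0:ℝ) 1) := by
    apply ContinuousOn.add
    · exact continuousOn_const.mul ((hFpowco _).mul (hAcont.continuousOn.pow 2))
    · exact continuousOn_const.mul ((hFpowco _).mul hBcont.continuousOn)
  have hbndco : ContinuousOn bnd (Icc (0:ℝ) 1) := by
    apply ContinuousOn.add
    · exact continuousOn_const.mul ((hFpowco _).mul (hAcont.continuousOn.pow 2))
    · exact continuousOn_const.mul ((hFpowco _).mul hBcont.continuousOn)
  have hGco : ContinuousOn G (Icc (0:ℝ) 1) :=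
    (continuousOn_const.mul (hFpowco _)).mul hAcont.continuousOn
  have hbndint : IntervalIntegrable bnd MeasureTheory.volume 0 1 :=
    (hbndco.mono (by rw [Set.uIcc_of_le (zero_le_one : (0:ℝ) ≤ 1)])).intervalIntegrable
  have hbndnn : ∀ s, s ∈ Icc (0:ℝ) 1 → 0 ≤ bnd s := by
    intro s _
    have h1 : (0:ℝ) ≤ p * |p - q| * (F s ^ ((p - 2*q)/q) * A s ^ 2) :=
      mul_nonneg (mul_nonneg hp0.le (abs_nonneg _))
        (mul_nonneg (Real.rpow_nonneg (hFnn s) _) (sq_nonneg _))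
    have h2 : (0:ℝ) ≤ p * (q - 1) * (F s ^ ((p - q)/q) * B s) :=
      mul_nonneg (mul_nonneg hp0.le (by linarith))
        (mul_nonneg (Real.rpow_nonneg (hFnn s) _) (hBnn s))
    simp only [hbnddef]
    linarith
  -- key bound on G
  have hkey : ∀ θ ∈ Icc (0:ℝ) 1, G θ ≤ G 0 + ∫ s in (0:ℝ)..1, bnd s := by
    intro θ hθ
    have hsub : Set.uIcc (0:ℝ) θ ⊆ Icc (0:ℝ) 1 := by
      rw [Set.uIcc_of_le hθ.1]
      exact Set.Icc_subset_Icc le_rfl hθ.2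
    have hG2int : IntervalIntegrable G2 MeasureTheory.volume 0 θ :=
      (hG2co.mono hsub).intervalIntegrable
    have hftc : ∫ s in (0:ℝ)..θ, G2 s = G θ - G 0 :=
      intervalIntegral.integral_eq_sub_of_hasDerivAt
        (fun s hs => hGderiv s (hsub hs)) hG2int
    have hbndintθ : IntervalIntegrable bnd MeasureTheory.volume 0 θ :=
      (hbndco.mono hsub).intervalIntegrable
    have hmono : (∫ s in (0:ℝ)..θ, G2 s) ≤ ∫ s in (0:ℝ)..θ, bnd s := by
      apply intervalIntegral.integral_mono_on hθ.1 hG2int hbndintθ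
      intro s hs
      have hs1 : s ∈ Icc (0:ℝ) 1 := ⟨hs.1, le_trans hs.2 hθ.2⟩
      have hX : (0:ℝ) ≤ F s ^ ((p - 2*q)/q) * A s ^ 2 :=
        mul_nonneg (Real.rpow_nonneg (hFnn s) _) (sq_nonneg _)
      have h1 : p * (p - q) ≤ p * |p - q| :=
        mul_le_mul_of_nonneg_left (le_abs_self _) hp0.le
      have := mul_le_mul_of_nonneg_right h1 hX
      simp only [hG2def, hbnddef]
      linarith
    have hmono2 : (∫ s in (0:ℝ)..θ, bnd s) ≤ ∫ s in (0:ℝ)..1, bnd s := by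
      apply intervalIntegral.integral_mono_interval le_rfl hθ.1 hθ.2
      · exact (MeasureTheory.ae_restrict_iff' measurableSet_Ioc).mpr
          (MeasureTheory.ae_of_all _ fun s hs => hbndnn s ⟨hs.1.le, hs.2⟩)
      · exact hbndint
    linarith
  -- FTC for g on [0,1]
  have hGint : IntervalIntegrable G MeasureTheory.volume 0 1 :=
    (hGco.mono (by rw [Set.uIcc_of_le (zero_le_one : (0:ℝ) ≤ 1)])).intervalIntegrable
  have hftc1 : ∫ s in (0:ℝ)..1, G s = F 1 ^ (p/q) - F 0 ^ (p/q) :=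
    intervalIntegral.integral_eq_sub_of_hasDerivAt
      (fun s hs => hgderiv s (by rwa [Set.uIcc_of_le (zero_le_one : (0:ℝ) ≤ 1)] at hs)) hGint
  have hGle : (∫ s in (0:ℝ)..1, G s) ≤ G 0 + ∫ s in (0:ℝ)..1, bnd s := by
    have := intervalIntegral.integral_mono_on (zero_le_one : (0:ℝ) ≤ 1) hGint
      (intervalIntegrable_const (c := G 0 + ∫ s in (0:ℝ)..1, bnd s)) hkey
    rwa [intervalIntegral.integral_const, sub_zero, one_smul] at this
  -- split the bound integral
  have hint1 : IntervalIntegrable (fun s => F s ^ ((p - 2*q)/q) * A s ^ 2)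
      MeasureTheory.volume 0 1 := by
    apply ContinuousOn.intervalIntegrable
    rw [Set.uIcc_of_le (zero_le_one : (0:ℝ) ≤ 1)]
    exact (hFpowco _).mul (hAcont.continuousOn.pow 2)
  have hint2 : IntervalIntegrable (fun s => F s ^ ((p - q)/q) * B s)
      MeasureTheory.volume 0 1 := by
    apply ContinuousOn.intervalIntegrable
    rw [Set.uIcc_of_le (zero_le_one : (0:ℝ) ≤ 1)]
    exact (hFpowco _).mul hBcont.continuousOn
  have hsplit : (∫ s in (0:ℝ)..1, bnd s) =
      p * |p - q| * (∫ s in (0:ℝ)..1, F s ^ ((p - 2*q)/q) * A s ^ 2) +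
      p * (q - 1) * (∫ s in (0:ℝ)..1, F s ^ ((p - q)/q) * B s) := by
    rw [hbnddef]
    rw [intervalIntegral.integral_add (hint1.const_mul _) (hint2.const_mul _),
      intervalIntegral.integral_const_mul, intervalIntegral.integral_const_mul]
  -- convert rpow expressions
  have hconv : ∀ (c : ℝ) (θ : ℝ), (F θ ^ (1/q)) ^ c = F θ ^ (c/q) := by
    intro c θ
    rw [← Real.rpow_mul (hFnn θ)]
    congr 1
    field_simp
  simp only [hconv]
  have e1 : p/q = p/q := rfl
  have eg : G 0 = p * F 0 ^ ((p - q)/q) * A 0 := rfl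
  have hfinal : F 1 ^ (p/q) ≤ F 0 ^ (p/q) + G 0 + ∫ s in (0:ℝ)..1, bnd s := by
    have := hGle
    linarith [hftc1, hGle]
  rw [hsplit] at hfinal
  calc F 1 ^ (p/q) ≤ F 0 ^ (p/q) + G 0 +
        (p * |p - q| * (∫ s in (0:ℝ)..1, F s ^ ((p - 2*q)/q) * A s ^ 2) +
         p * (q - 1) * (∫ s in (0:ℝ)..1, F s ^ ((p - q)/q) * B s)) := hfinal
    _ = F 0 ^ (p/q) + p * F 0 ^ ((p - q)/q) * A 0 +
        p * |p - q| * (∫ s in (0:ℝ)..1, F s ^ ((p - 2*q)/q) * A s ^ 2) +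
        p * (q - 1) * (∫ s in (0:ℝ)..1, F s ^ ((p - q)/q) * B s) := by
        rw [eg]; ring
end

section
/- Let (S, 𝒜, μ) be a measure space and let y, Y, ξ, η be real-valued functions in L⁴(μ) satisfying Y = y + ξ + η μ-almost everywhere. Then ∫_S η (y³ − Y³) dμ ≤ (9/8) ∫_S ξ² (y² + Y²) dμ. (This monotonicity estimate for the cubic nonlinearity is the elementary calculation underlying the L² error analysis of the Euler scheme.) -/
open MeasureTheory

private lemma memLp_mul_of_memLp {S : Type*} [MeasurableSpace S] {μ : Measure S}
    {f g : S → ℝ} {p q r : ENNReal} (hf : MemLp f p μ) (hg : MemLp g q μ)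
    (h : 1 / r = 1 / p + 1 / q) : MemLp (fun x => f x * g x) r μ := by
  haveI : ENNReal.HolderTriple p q r := ⟨by simpa [one_div] using h.symm⟩
  have := MemLp.smul (𝕜 := ℝ) (r := r) hg hf
  exact this

private lemma integrable_mul_of_memLp2 {S : Type*} [MeasurableSpace S] {μ : Measure S}
    {f g : S → ℝ} (hf : MemLp f 2 μ) (hg : MemLp g 2 μ) :
    Integrable (fun x => f x * g x) μ := by
  have : MemLp (fun x => f x * g x) 1 μ :=
    memLp_mul_of_memLp hf hg (by rw [div_one]; exact (ENNReal.add_halves 1).symm)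
  exact memLp_one_iff_integrable.mp this

/-- Monotonicity estimate for the cubic nonlinearity: if `Y = y + ξ + η` a.e. with
`y, Y, ξ, η ∈ L⁴(μ)`, then `∫ η (y³ − Y³) dμ ≤ (9/8) ∫ ξ² (y² + Y²) dμ`. -/
theorem cubic_monotonicity_estimate
    (S : Type*) [MeasurableSpace S] (μ : Measure S)
    (y Y ξ η : S → ℝ)
    (hy : MemLp y 4 μ) (hY : MemLp Y 4 μ) (hξ : MemLp ξ 4 μ) (hη : MemLp η 4 μ)
    (hdecomp : ∀ᵐ x ∂μ, Y x = y x + ξ x + η x) :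
    ∫ x, η x * ((y x) ^ 3 - (Y x) ^ 3) ∂μ ≤
      (9 / 8 : ℝ) * ∫ x, (ξ x) ^ 2 * ((y x) ^ 2 + (Y x) ^ 2) ∂μ := by
  have h4 : (1 : ENNReal) / 2 = 1 / 4 + 1 / 4 := by
    rw [ENNReal.div_add_div_same, show (4:ENNReal) = 2*2 by norm_num,
      ENNReal.div_eq_div_iff (by norm_num) (by norm_num) (by norm_num) (by norm_num)]
    ring
  have hηy : MemLp (fun x => η x * y x) 2 μ := memLp_mul_of_memLp hη hy h4
  have hηY : MemLp (fun x => η x * Y x) 2 μ := memLp_mul_of_memLp hη hY h4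
  have hyy : MemLp (fun x => y x * y x) 2 μ := memLp_mul_of_memLp hy hy h4
  have hYY : MemLp (fun x => Y x * Y x) 2 μ := memLp_mul_of_memLp hY hY h4
  have hξξ : MemLp (fun x => ξ x * ξ x) 2 μ := memLp_mul_of_memLp hξ hξ h4
  have hL : Integrable (fun x => η x * ((y x) ^ 3 - (Y x) ^ 3)) μ := by
    have h1 := integrable_mul_of_memLp2 hηy hyy
    have h2 := integrable_mul_of_memLp2 hηY hYY
    have := h1.sub h2
    refine this.congr (Filter.Eventually.of_forall fun x => ?_)
    simp only [Pi.sub_apply]; ring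
  have hR : Integrable (fun x => (ξ x) ^ 2 * ((y x) ^ 2 + (Y x) ^ 2)) μ := by
    have h1 := integrable_mul_of_memLp2 hξξ hyy
    have h2 := integrable_mul_of_memLp2 hξξ hYY
    have := h1.add h2
    refine this.congr (Filter.Eventually.of_forall fun x => ?_)
    simp only [Pi.add_apply]; ring
  have key : ∫ x, η x * ((y x) ^ 3 - (Y x) ^ 3) ∂μ ≤
      ∫ x, (9 / 8 : ℝ) * ((ξ x) ^ 2 * ((y x) ^ 2 + (Y x) ^ 2)) ∂μ := by
    refine integral_mono_ae hL (hR.const_mul _) ?_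
    filter_upwards [hdecomp] with x hx
    rw [show η x = Y x - y x - ξ x by linarith]
    have hQ : 0 ≤ y x ^ 2 + y x * Y x + Y x ^ 2 := by
      nlinarith [sq_nonneg (y x + Y x), sq_nonneg (y x - Y x)]
    have h1 : 0 ≤ (ξ x - 2 * (Y x - y x)) ^ 2 * (y x ^ 2 + y x * Y x + Y x ^ 2) :=
      mul_nonneg (sq_nonneg _) hQ
    have h3 : 0 ≤ ξ x ^ 2 * (y x - Y x) ^ 2 := mul_nonneg (sq_nonneg _) (sq_nonneg _)
    have h4a : 0 ≤ ξ x ^ 2 * y x ^ 2 := mul_nonneg (sq_nonneg _) (sq_nonneg _)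
    have h4b : 0 ≤ ξ x ^ 2 * Y x ^ 2 := mul_nonneg (sq_nonneg _) (sq_nonneg _)
    nlinarith [h1, h3, h4a, h4b]
  rwa [integral_const_mul] at key
end

section
/- Let (S, 𝒜, μ) be a measure space and let u, v be real-valued functions belonging to L²(μ) ∩ L¹²(μ). Then u³ − v³ ∈ L^{3/2}(μ) and ‖u³ − v³‖_{L^{3/2}} ≤ (3/2) ‖u − v‖_{L²} (‖u‖_{L¹²}² + ‖v‖_{L¹²}²). (This Hölder estimate for the cubic difference is used to bound the nonlinear term in the pathwise error analysis.) -/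
open MeasureTheory

lemma ennreal_arith_32 : (1:ENNReal) / ENNReal.ofReal (3/2) = 1/2 + 1/6 := by
  have h32 : ENNReal.ofReal (3/2) = 3/2 := by
    rw [ENNReal.ofReal_div_of_pos (by norm_num)]; norm_num
  rw [h32]
  refine (ENNReal.toReal_eq_toReal_iff' (by simp [ENNReal.div_eq_top])
    (by simp [ENNReal.div_eq_top])).mp ?_
  rw [ENNReal.toReal_add (by simp [ENNReal.div_eq_top]) (by simp [ENNReal.div_eq_top])]
  simp [ENNReal.toReal_div]
  norm_num

lemma ennreal_arith_612 : (1:ENNReal) / 6 = 1/12 + 1/12 := by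
  refine (ENNReal.toReal_eq_toReal_iff' (by simp [ENNReal.div_eq_top])
    (by simp [ENNReal.div_eq_top])).mp ?_
  rw [ENNReal.toReal_add (by simp [ENNReal.div_eq_top]) (by simp [ENNReal.div_eq_top])]
  simp [ENNReal.toReal_div]
  norm_num

/-- Hölder estimate for the cubic difference: if `u, v ∈ L²(μ) ∩ L¹²(μ)`, then
`u³ − v³ ∈ L^{3/2}(μ)` and
`‖u³ − v³‖_{L^{3/2}} ≤ (3/2) ‖u − v‖_{L²} (‖u‖_{L¹²}² + ‖v‖_{L¹²}²)`. -/
theorem cubic_difference_holder_estimate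
    (S : Type*) [MeasurableSpace S] (μ : Measure S)
    (u v : S → ℝ)
    (hu2 : MemLp u 2 μ) (hu12 : MemLp u 12 μ)
    (hv2 : MemLp v 2 μ) (hv12 : MemLp v 12 μ) :
    MemLp (fun x => (u x) ^ 3 - (v x) ^ 3) (ENNReal.ofReal (3 / 2)) μ ∧
      (∫ x, |(u x) ^ 3 - (v x) ^ 3| ^ ((3:ℝ) / 2) ∂μ) ^ ((2:ℝ) / 3) ≤
        (3 / 2 : ℝ) * (∫ x, |u x - v x| ^ (2:ℝ) ∂μ) ^ ((1:ℝ) / 2) *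
          (((∫ x, |u x| ^ (12:ℝ) ∂μ) ^ ((1:ℝ) / 12)) ^ 2 +
            ((∫ x, |v x| ^ (12:ℝ) ∂μ) ^ ((1:ℝ) / 12)) ^ 2) := by
  set p : ENNReal := ENNReal.ofReal (3/2) with hp
  set g : S → ℝ := fun x => u x - v x with hgdef
  set q : S → ℝ := fun x => (u x) ^ 2 + (v x) ^ 2 with hqdef
  set h : S → ℝ := fun x => (3/2 : ℝ) * q x with hhdef
  set w : S → ℝ := fun x => (u x) ^ 3 - (v x) ^ 3 with hwdef
  have hpqr : 1 / p = 1 / 2 + 1 / 6 := ennreal_arith_32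
  have hg2 : MemLp g 2 μ := hu2.sub hv2
  -- u² and v² are in L⁶
  have huu : MemLp (fun x => (u x) ^ 2) 6 μ := by
    have := hu12.smul (𝕜 := ℝ) (r := 6) hu12 (hpqr := ⟨by simpa only [one_div] using ennreal_arith_612.symm⟩)
    have heq : (u • u) = fun x => (u x) ^ 2 := by funext x; simp [Pi.smul_apply, smul_eq_mul, sq]
    rwa [heq] at this
  have hvv : MemLp (fun x => (v x) ^ 2) 6 μ := by
    have := hv12.smul (𝕜 := ℝ) (r := 6) hv12 (hpqr := ⟨by simpa only [one_div] using ennreal_arith_612.symm⟩)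
    have heq : (v • v) = fun x => (v x) ^ 2 := by funext x; simp [Pi.smul_apply, smul_eq_mul, sq]
    rwa [heq] at this
  have hq6 : MemLp q 6 μ := huu.add hvv
  have hh6 : MemLp h 6 μ := hq6.const_mul _
  -- the product g·h is in L^p, 1/p = 1/2 + 1/6
  have hgh : MemLp (g • h) p μ := hh6.smul hg2 (hpqr := ⟨by simpa only [one_div] using hpqr.symm⟩)
  -- pointwise bound |w| ≤ |g·h|
  have hptw : ∀ x, ‖w x‖ ≤ ‖(g • h) x‖ := by
    intro x
    have hq0 : 0 ≤ q x := by simp only [hqdef]; positivity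
    have hfac : w x = g x * ((u x)^2 + u x * v x + (v x)^2) := by
      simp only [hwdef, hgdef]; ring
    have habs : |(u x)^2 + u x * v x + (v x)^2| ≤ (3/2 : ℝ) * q x := by
      rw [abs_le]
      constructor <;> [skip; skip] <;>
        simp only [hqdef] <;>
        nlinarith [sq_nonneg (u x + v x), sq_nonneg (u x - v x), sq_nonneg (u x), sq_nonneg (v x)]
    have : ‖(g • h) x‖ = |g x| * ((3/2:ℝ) * q x) := by
      have hh0 : 0 ≤ h x := by simp only [hhdef]; positivity
      show ‖g x • h x‖ = _
      rw [smul_eq_mul, Real.norm_eq_abs, abs_mul, abs_of_nonneg hh0]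
    rw [this, Real.norm_eq_abs, hfac, abs_mul]
    exact mul_le_mul_of_nonneg_left habs (abs_nonneg _)
  -- measurability of w
  have hwmeas : AEStronglyMeasurable w μ := by
    have h3 : ∀ (f : S → ℝ), AEStronglyMeasurable f μ →
        AEStronglyMeasurable (fun x => (f x)^3) μ := by
      intro f hf
      have : (fun x => (f x)^3) = fun x => f x * f x * f x := by funext x; ring
      rw [this]; exact (hf.mul hf).mul hf
    exact (h3 u hu2.1).sub (h3 v hv2.1)
  have hmem : MemLp w p μ := hgh.of_le hwmeas (Filter.Eventually.of_forall hptw)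
  refine ⟨hmem, ?_⟩
  -- the eLpNorm chain
  have hp0 : p ≠ 0 := by
    simp only [hp, ne_eq, ENNReal.ofReal_eq_zero, not_le]; norm_num
  have hptop : p ≠ ⊤ := ENNReal.ofReal_ne_top
  have hptoReal : p.toReal = 3/2 := ENNReal.toReal_ofReal (by norm_num)
  -- eLpNorm of squares
  have hsq : ∀ (f : S → ℝ), eLpNorm (fun x => (f x)^2) 6 μ = eLpNorm f 12 μ ^ (2:ℝ) := by
    intro f
    have heq : (fun x => (f x)^2) = fun x => ‖f x‖ ^ (2:ℝ) := by
      funext x; rw [Real.rpow_two]; simp [Real.norm_eq_abs, sq_abs]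
    rw [heq, eLpNorm_norm_rpow f (by norm_num : (0:ℝ) < 2)]
    congr 1
    rw [ENNReal.ofReal_ofNat]
    norm_num
  have chain : eLpNorm w p μ ≤
      eLpNorm g 2 μ * (ENNReal.ofReal (3/2) *
        (eLpNorm u 12 μ ^ (2:ℝ) + eLpNorm v 12 μ ^ (2:ℝ))) := by
    calc eLpNorm w p μ ≤ eLpNorm (g • h) p μ := eLpNorm_mono hptw
      _ ≤ eLpNorm g 2 μ * eLpNorm h 6 μ :=
          eLpNorm_smul_le_mul_eLpNorm hh6.1 hg2.1 (hpqr := ⟨by simpa only [one_div] using hpqr.symm⟩)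
      _ ≤ eLpNorm g 2 μ * (ENNReal.ofReal (3/2) *
            (eLpNorm u 12 μ ^ (2:ℝ) + eLpNorm v 12 μ ^ (2:ℝ))) := by
          gcongr
          have hhsmul : h = (3/2 : ℝ) • q := by funext x; simp [hhdef, smul_eq_mul]
          rw [hhsmul, eLpNorm_const_smul, Real.enorm_eq_ofReal (by norm_num)]
          gcongr
          calc eLpNorm q 6 μ ≤ eLpNorm (fun x => (u x)^2) 6 μ + eLpNorm (fun x => (v x)^2) 6 μ :=
                eLpNorm_add_le huu.1 hvv.1 (by norm_num)
            _ = eLpNorm u 12 μ ^ (2:ℝ) + eLpNorm v 12 μ ^ (2:ℝ) := by rw [hsq u, hsq v]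
  -- convert to real integrals
  have hLw : eLpNorm w p μ =
      ENNReal.ofReal ((∫ x, |w x| ^ ((3:ℝ)/2) ∂μ) ^ ((2:ℝ)/3)) := by
    rw [hmem.eLpNorm_eq_integral_rpow_norm hp0 hptop, hptoReal]
    norm_num [Real.norm_eq_abs]
  have hLg : eLpNorm g 2 μ =
      ENNReal.ofReal ((∫ x, |g x| ^ (2:ℝ) ∂μ) ^ ((1:ℝ)/2)) := by
    rw [hg2.eLpNorm_eq_integral_rpow_norm (by norm_num) (by norm_num)]
    norm_num [Real.norm_eq_abs]
  have hL12 : ∀ (f : S → ℝ), MemLp f 12 μ → eLpNorm f 12 μ =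
      ENNReal.ofReal ((∫ x, |f x| ^ (12:ℝ) ∂μ) ^ ((1:ℝ)/12)) := by
    intro f hf
    rw [hf.eLpNorm_eq_integral_rpow_norm (by norm_num) (by norm_num)]
    norm_num [Real.norm_eq_abs]
  set Iu : ℝ := (∫ x, |u x| ^ (12:ℝ) ∂μ) ^ ((1:ℝ)/12) with hIu
  set Iv : ℝ := (∫ x, |v x| ^ (12:ℝ) ∂μ) ^ ((1:ℝ)/12) with hIv
  set Ig : ℝ := (∫ x, |g x| ^ (2:ℝ) ∂μ) ^ ((1:ℝ)/2) with hIg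
  have hIu0 : 0 ≤ Iu := Real.rpow_nonneg (integral_nonneg fun x => by positivity) _
  have hIv0 : 0 ≤ Iv := Real.rpow_nonneg (integral_nonneg fun x => by positivity) _
  have hIg0 : 0 ≤ Ig := Real.rpow_nonneg (integral_nonneg fun x => by positivity) _
  have hRHS : eLpNorm g 2 μ * (ENNReal.ofReal (3/2) *
      (eLpNorm u 12 μ ^ (2:ℝ) + eLpNorm v 12 μ ^ (2:ℝ))) =
      ENNReal.ofReal ((3/2 : ℝ) * Ig * (Iu ^ 2 + Iv ^ 2)) := by
    rw [hLg, hL12 u hu12, hL12 v hv12, ← hIu, ← hIv,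
      ENNReal.ofReal_rpow_of_nonneg hIu0 (by norm_num),
      ENNReal.ofReal_rpow_of_nonneg hIv0 (by norm_num),
      ← ENNReal.ofReal_add (by positivity) (by positivity),
      ← ENNReal.ofReal_mul (by norm_num),
      ← ENNReal.ofReal_mul hIg0]
    rw [Real.rpow_two, Real.rpow_two]
    ring_nf
  rw [hLw, hRHS] at chain
  have := (ENNReal.ofReal_le_ofReal_iff (by positivity)).mp chain
  calc (∫ x, |(u x) ^ 3 - (v x) ^ 3| ^ ((3:ℝ)/2) ∂μ) ^ ((2:ℝ)/3)
      = (∫ x, |w x| ^ ((3:ℝ)/2) ∂μ) ^ ((2:ℝ)/3) := rfl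
    _ ≤ (3/2 : ℝ) * Ig * (Iu ^ 2 + Iv ^ 2) := this
    _ = (3/2 : ℝ) * (∫ x, |u x - v x| ^ (2:ℝ) ∂μ) ^ ((1:ℝ)/2) * (Iu ^ 2 + Iv ^ 2) := rfl
end
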